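/- Lévy inversion formula: for a Borel probability measure μ on ℝ with characteristic function φ(s) = ∫ e^{ist} dμ(t), and real numbers a < b with μ({a}) = μ({b}) = 0, one has μ((a, b]) = lim_{c→∞} (1/2π) ∫_{-c}^{c} (e^{-isa} - e^{-isb})/(is) · φ(s) ds. -/

import Mathlib

open MeasureTheory Complex Filter Real

namespace LevyAux

open Set Topology


lemma abs_sinc_le_one (x : ℝ) : |Real.sin x / x| ≤ 1 := by
  rcases eq_or_ne x 0 with h | h
  · simp [h]
  · rw [abs_div]
    exact div_le_one_of_le₀ Real.abs_sin_le_abs (abs_nonneg x)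

lemma intervalIntegrable_of_bounded {f : ℝ → ℂ} {C : ℝ}
    (hm : AEStronglyMeasurable f volume) (h : ∀ x, ‖f x‖ ≤ C) (a b : ℝ) :
    IntervalIntegrable f volume a b := by
  rw [intervalIntegrable_iff]
  exact (integrableOn_const measure_Ioc_lt_top.ne).mono'
    hm.restrict (ae_of_all _ h)

lemma intervalIntegrable_of_bounded_real {f : ℝ → ℝ} {C : ℝ}
    (hm : AEStronglyMeasurable f volume) (h : ∀ x, ‖f x‖ ≤ C) (a b : ℝ) :
    IntervalIntegrable f volume a b := by
  rw [intervalIntegrable_iff]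
  exact (integrableOn_const measure_Ioc_lt_top.ne).mono'
    hm.restrict (ae_of_all _ h)

lemma sinc_integrable (a b : ℝ) :
    IntervalIntegrable (fun x => Real.sin x / x) volume a b :=
  intervalIntegrable_of_bounded_real
    ((Real.measurable_sin.div measurable_id).aestronglyMeasurable)
    (fun x => by rw [Real.norm_eq_abs]; exact abs_sinc_le_one x) a b

lemma integral_exp_neg_mul_sin (t c : ℝ) :
    ∫ x in (0:ℝ)..c, Real.exp (-(t*x)) * Real.sin x
      = (1 - Real.exp (-(t*c)) * (Real.cos c + t * Real.sin c)) / (1 + t^2) := by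
  have ht : (1:ℝ) + t^2 ≠ 0 := by positivity
  have hder : ∀ x ∈ Set.uIcc (0:ℝ) c,
      HasDerivAt (fun x => -(Real.exp (-(t*x)) * (t * Real.sin x + Real.cos x)) / (1+t^2))
        (Real.exp (-(t*x)) * Real.sin x) x := by
    intro x _
    have h1 : HasDerivAt (fun x : ℝ => Real.exp (-(t*x))) (Real.exp (-(t*x)) * (-t)) x := by
      have := (hasDerivAt_id x).const_mul (-t)
      have h0 : HasDerivAt (fun x : ℝ => -(t*x)) (-t) x := by
        simpa [neg_mul, mul_comm] using this
      exact (Real.hasDerivAt_exp _).comp x h0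
    have h2 : HasDerivAt (fun x : ℝ => t * Real.sin x + Real.cos x)
        (t * Real.cos x + (- Real.sin x)) x :=
      ((Real.hasDerivAt_sin x).const_mul t).add (Real.hasDerivAt_cos x)
    have h3 := ((h1.mul h2).neg).div_const (1 + t^2)
    refine h3.congr_deriv ?_
    rw [div_eq_iff ht]
    ring
  rw [intervalIntegral.integral_eq_sub_of_hasDerivAt hder
    (((Real.continuous_exp.comp (continuous_const.mul continuous_id).neg).mul
      Real.continuous_sin).intervalIntegrable 0 c)]
  field_simp
  simp only [mul_zero, neg_zero, Real.exp_zero, Real.sin_zero, Real.cos_zero]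
  ring

lemma integral_exp_neg_mul_Ioi {x : ℝ} (hx : 0 < x) :
    ∫ t in Set.Ioi (0:ℝ), Real.exp (-(x*t)) = x⁻¹ := by
  have := integral_comp_mul_left_Ioi (fun u => Real.exp (-u)) 0 hx
  simp only [mul_zero, integral_exp_neg_Ioi, neg_zero, Real.exp_zero, smul_eq_mul, mul_one] at this
  simpa using this



lemma key_identity {c : ℝ} (hc : 0 < c) :
    ∫ x in (0:ℝ)..c, Real.sin x / x
      = ∫ t in Set.Ioi (0:ℝ), (1 - Real.exp (-(t*c)) * (Real.cos c + t * Real.sin c)) / (1 + t^2) := by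
  have hmeas : AEStronglyMeasurable (fun p : ℝ × ℝ => Real.sin p.1 * Real.exp (-(p.1 * p.2)))
      ((volume.restrict (Set.Ioc 0 c)).prod (volume.restrict (Set.Ioi 0))) :=
    (Continuous.aestronglyMeasurable (by fun_prop))
  have hint : Integrable (fun p : ℝ × ℝ => Real.sin p.1 * Real.exp (-(p.1 * p.2)))
      ((volume.restrict (Set.Ioc 0 c)).prod (volume.restrict (Set.Ioi 0))) := by
    rw [integrable_prod_iff hmeas]
    constructor
    · filter_upwards [ae_restrict_mem measurableSet_Ioc] with x hx
      have : IntegrableOn (fun t => Real.exp (-(x * t))) (Set.Ioi 0) := by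
        have := exp_neg_integrableOn_Ioi 0 hx.1
        simpa [neg_mul] using this
      exact this.const_mul (Real.sin x)
    · apply (integrable_const (1:ℝ)).mono'
      · exact hmeas.norm.integral_prod_right'
      · filter_upwards [ae_restrict_mem measurableSet_Ioc] with x hx
        have hx0 : 0 < x := hx.1
        have : (fun t => ‖Real.sin x * Real.exp (-(x * t))‖)
            = fun t => |Real.sin x| * Real.exp (-(x * t)) := by
          funext t
          rw [norm_mul, Real.norm_eq_abs, Real.norm_eq_abs, abs_of_pos (Real.exp_pos _)]
        rw [Real.norm_eq_abs, this, integral_const_mul, integral_exp_neg_mul_Ioi hx0,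
          _root_.abs_of_nonneg (by positivity : (0:ℝ) ≤ |Real.sin x| * x⁻¹)]
        calc |Real.sin x| * x⁻¹ = |Real.sin x / x| := by
              rw [abs_div, div_eq_mul_inv, abs_of_pos hx0]
          _ ≤ 1 := abs_sinc_le_one x
  calc ∫ x in (0:ℝ)..c, Real.sin x / x
      = ∫ x in Set.Ioc (0:ℝ) c, Real.sin x / x := intervalIntegral.integral_of_le hc.le
    _ = ∫ x in Set.Ioc (0:ℝ) c, ∫ t in Set.Ioi (0:ℝ), Real.sin x * Real.exp (-(x*t)) := by
        refine setIntegral_congr_fun measurableSet_Ioc (fun x hx => ?_)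
        rw [integral_const_mul, integral_exp_neg_mul_Ioi hx.1, div_eq_mul_inv]
    _ = ∫ t in Set.Ioi (0:ℝ), ∫ x in Set.Ioc (0:ℝ) c, Real.sin x * Real.exp (-(x*t)) :=
        integral_integral_swap hint
    _ = ∫ t in Set.Ioi (0:ℝ), (1 - Real.exp (-(t*c)) * (Real.cos c + t * Real.sin c)) / (1 + t^2) := by
        refine setIntegral_congr_fun measurableSet_Ioi (fun t _ => ?_)
        rw [← intervalIntegral.integral_of_le hc.le, ← integral_exp_neg_mul_sin t c]
        refine intervalIntegral.integral_congr (fun x _ => ?_)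
        rw [mul_comm, mul_comm x t]


lemma err_bound {c : ℝ} (hc : 0 < c) (t : ℝ) (ht : 0 ≤ t) :
    |Real.exp (-(t*c)) * (Real.cos c + t * Real.sin c) / (1 + t^2)| ≤ 2 * Real.exp (-(c*t)) := by
  rw [abs_div, _root_.abs_of_pos (by positivity : (0:ℝ) < 1 + t^2), abs_mul,
    _root_.abs_of_pos (Real.exp_pos _), div_le_iff₀ (by positivity)]
  have h1 : |Real.cos c + t * Real.sin c| ≤ 1 + t := by
    calc |Real.cos c + t * Real.sin c| ≤ |Real.cos c| + |t * Real.sin c| := abs_add_le _ _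
      _ ≤ 1 + t := by
        have := Real.abs_cos_le_one c
        have h2 : |t * Real.sin c| ≤ t := by
          rw [abs_mul, _root_.abs_of_nonneg ht]
          nlinarith [Real.abs_sin_le_one c, abs_nonneg (Real.sin c)]
        linarith
  have h3 : 1 + t ≤ 2 * (1 + t^2) := by nlinarith
  have h4 : Real.exp (-(t*c)) = Real.exp (-(c*t)) := by rw [mul_comm]
  calc Real.exp (-(t*c)) * |Real.cos c + t * Real.sin c|
      ≤ Real.exp (-(t*c)) * (2 * (1 + t^2)) := by
        apply mul_le_mul_of_nonneg_left (le_trans h1 h3) (Real.exp_pos _).le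
    _ = 2 * Real.exp (-(c*t)) * (1 + t^2) := by rw [h4]; ring

lemma err_integrable {c : ℝ} (hc : 0 < c) :
    IntegrableOn (fun t => Real.exp (-(t*c)) * (Real.cos c + t * Real.sin c) / (1 + t^2))
      (Set.Ioi (0:ℝ)) := by
  have hexp : IntegrableOn (fun t => 2 * Real.exp (-(c*t))) (Set.Ioi (0:ℝ)) := by
    have := exp_neg_integrableOn_Ioi 0 hc
    exact (this.congr_fun (fun t _ => by rw [neg_mul]) measurableSet_Ioi).const_mul 2
  have hcont : Continuous (fun t : ℝ => Real.exp (-(t*c)) * (Real.cos c + t * Real.sin c) / (1 + t^2)) := by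
    apply Continuous.div (by fun_prop) (by fun_prop)
    intro t; positivity
  refine hexp.mono' hcont.aestronglyMeasurable ?_
  filter_upwards [ae_restrict_mem measurableSet_Ioi] with t ht
  rw [Real.norm_eq_abs]
  exact err_bound hc t ht.le

lemma diff_Si {c : ℝ} (hc : 0 < c) :
    (∫ x in (0:ℝ)..c, Real.sin x / x) - π/2
      = -∫ t in Set.Ioi (0:ℝ), Real.exp (-(t*c)) * (Real.cos c + t * Real.sin c) / (1 + t^2) := by
  have hpi : (π/2 : ℝ) = ∫ t in Set.Ioi (0:ℝ), (1 + t^2)⁻¹ := by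
    rw [integral_Ioi_inv_one_add_sq]; simp
  have hf : IntegrableOn
      (fun t => (1 - Real.exp (-(t*c)) * (Real.cos c + t * Real.sin c)) / (1 + t^2))
      (Set.Ioi (0:ℝ)) := by
    have h := integrable_inv_one_add_sq.integrableOn.sub (err_integrable hc)
    refine IntegrableOn.congr_fun h (fun t _ => ?_) measurableSet_Ioi
    have h2 : (1:ℝ) + t^2 ≠ 0 := by positivity
    simp only [Pi.sub_apply]
    field_simp
  rw [key_identity hc, hpi,
    ← integral_sub hf integrable_inv_one_add_sq.integrableOn, ← integral_neg]
  refine setIntegral_congr_fun measurableSet_Ioi (fun t _ => ?_)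
  have h2 : (1:ℝ) + t^2 ≠ 0 := by positivity
  field_simp
  ring

lemma abs_diff_Si {c : ℝ} (hc : 0 < c) :
    |(∫ x in (0:ℝ)..c, Real.sin x / x) - π/2| ≤ 2 / c := by
  rw [diff_Si hc, abs_neg]
  have hexp : IntegrableOn (fun t => 2 * Real.exp (-(c*t))) (Set.Ioi (0:ℝ)) := by
    have := exp_neg_integrableOn_Ioi 0 hc
    exact (this.congr_fun (fun t _ => by rw [neg_mul]) measurableSet_Ioi).const_mul 2
  calc |∫ t in Set.Ioi (0:ℝ), Real.exp (-(t*c)) * (Real.cos c + t * Real.sin c) / (1 + t^2)|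
      ≤ ∫ t in Set.Ioi (0:ℝ), |Real.exp (-(t*c)) * (Real.cos c + t * Real.sin c) / (1 + t^2)| :=
        by exact
          norm_integral_le_integral_norm (μ := volume.restrict (Set.Ioi 0))
            (fun t => Real.exp (-(t*c)) * (Real.cos c + t * Real.sin c) / (1 + t^2))
    _ ≤ ∫ t in Set.Ioi (0:ℝ), 2 * Real.exp (-(c*t)) := by
        refine setIntegral_mono_on ((err_integrable hc).abs) hexp measurableSet_Ioi ?_
        intro t ht
        exact err_bound hc t ht.le
    _ = 2 / c := by
        rw [integral_const_mul, integral_exp_neg_mul_Ioi hc, div_eq_mul_inv]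

lemma tendsto_Si :
    Tendsto (fun c => ∫ x in (0:ℝ)..c, Real.sin x / x) atTop (𝓝 (π/2)) := by
  have h0 : Tendsto (fun c : ℝ => 2 / c) atTop (𝓝 0) := by
    simpa using tendsto_const_nhds.div_atTop (tendsto_id (α := ℝ))
  have h1 : Tendsto (fun c => (∫ x in (0:ℝ)..c, Real.sin x / x) - π/2) atTop (𝓝 0) := by
    apply squeeze_zero_norm' _ h0
    filter_upwards [eventually_gt_atTop 0] with c hc
    rw [Real.norm_eq_abs]
    exact abs_diff_Si hc
  simpa using h1.add_const (π/2)

lemma abs_Si_le (d : ℝ) : |∫ x in (0:ℝ)..d, Real.sin x / x| ≤ 3 := by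
  have key : ∀ d : ℝ, 0 ≤ d → |∫ x in (0:ℝ)..d, Real.sin x / x| ≤ 3 := by
    intro d hd
    rcases le_or_gt d 2 with h2 | h2
    · have h := intervalIntegral.norm_integral_le_of_norm_le_const
          (C := 1) (f := fun x => Real.sin x / x) (a := (0:ℝ)) (b := d)
          (fun x _ => by rw [Real.norm_eq_abs]; exact abs_sinc_le_one x)
      rw [Real.norm_eq_abs, sub_zero, _root_.abs_of_nonneg hd, one_mul] at h
      linarith
    · have hd0 : (0:ℝ) < d := by linarith
      have := abs_diff_Si hd0
      have h3 : 2 / d ≤ 1 := by rw [div_le_one hd0]; linarith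
      have h4 : |π/2| ≤ 2 := by
        rw [_root_.abs_of_pos (by positivity)]
        linarith [Real.pi_le_four]
      calc |∫ x in (0:ℝ)..d, Real.sin x / x|
          = |((∫ x in (0:ℝ)..d, Real.sin x / x) - π/2) + π/2| := by rw [sub_add_cancel]
        _ ≤ |(∫ x in (0:ℝ)..d, Real.sin x / x) - π/2| + |π/2| := abs_add_le _ _
        _ ≤ 3 := by linarith
  rcases le_or_gt 0 d with hd | hd
  · exact key d hd
  · have h : ∫ x in (0:ℝ)..(-d), Real.sin x / x = ∫ x in d..(0:ℝ), Real.sin x / x := by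
      have h0 := intervalIntegral.integral_comp_neg (f := fun x => Real.sin x / x)
        (a := (0:ℝ)) (b := -d)
      simp only [Real.sin_neg, neg_div_neg_eq, neg_neg, neg_zero] at h0
      exact h0
    have h2 : ∫ x in (0:ℝ)..d, Real.sin x / x = -∫ x in (0:ℝ)..(-d), Real.sin x / x := by
      rw [h, ← intervalIntegral.integral_symm]
    rw [h2, abs_neg]
    exact key (-d) (by linarith)


lemma D_eq (c y : ℝ) :
    ∫ s in (0:ℝ)..c, Real.sin (s*y) / s = ∫ u in (0:ℝ)..(c*y), Real.sin u / u := by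
  rcases eq_or_ne y 0 with hy | hy
  · simp [hy]
  · have hpt : ∀ s : ℝ, Real.sin (s*y) / s = y * ((fun u => Real.sin u / u) (s*y)) := by
      intro s
      rcases eq_or_ne s 0 with hs | hs
      · simp [hs]
      · simp only
        field_simp
    calc ∫ s in (0:ℝ)..c, Real.sin (s*y) / s
        = ∫ s in (0:ℝ)..c, y * ((fun u => Real.sin u / u) (s*y)) :=
          intervalIntegral.integral_congr (fun s _ => hpt s)
      _ = y * ∫ s in (0:ℝ)..c, (fun u => Real.sin u / u) (s*y) :=
          intervalIntegral.integral_const_mul _ _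
      _ = y * (y⁻¹ • ∫ u in (0*y:ℝ)..(c*y), Real.sin u / u) := by
          rw [intervalIntegral.integral_comp_mul_right (a := (0:ℝ)) (b := c)
            (fun u => Real.sin u / u) hy]
      _ = ∫ u in (0:ℝ)..(c*y), Real.sin u / u := by
          rw [zero_mul, smul_eq_mul, ← mul_assoc, mul_inv_cancel₀ hy, one_mul]

lemma abs_D_le (c y : ℝ) : |∫ s in (0:ℝ)..c, Real.sin (s*y) / s| ≤ 3 := by
  rw [D_eq]; exact abs_Si_le _

lemma tendsto_D_pos {y : ℝ} (hy : 0 < y) :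
    Tendsto (fun c => ∫ s in (0:ℝ)..c, Real.sin (s*y) / s) atTop (𝓝 (π/2)) := by
  simp only [D_eq]
  exact tendsto_Si.comp (Tendsto.atTop_mul_const hy tendsto_id)

lemma D_neg_arg (c y : ℝ) :
    ∫ s in (0:ℝ)..c, Real.sin (s*(-y)) / s = -∫ s in (0:ℝ)..c, Real.sin (s*y) / s := by
  rw [← intervalIntegral.integral_neg]
  refine intervalIntegral.integral_congr (fun s _ => ?_)
  rw [mul_neg, Real.sin_neg, neg_div]

lemma tendsto_D_neg {y : ℝ} (hy : y < 0) :
    Tendsto (fun c => ∫ s in (0:ℝ)..c, Real.sin (s*y) / s) atTop (𝓝 (-(π/2))) := by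
  have h := (tendsto_D_pos (neg_pos.2 hy)).neg
  refine h.congr (fun c => ?_)
  rw [← D_neg_arg, neg_neg]


noncomputable def K (a b t s : ℝ) : ℂ :=
  (Complex.exp (Complex.I*s*(t-a)) - Complex.exp (Complex.I*s*(t-b)))/(Complex.I*s)

lemma norm_exp_I_mul_sub_one_le (x : ℝ) : ‖Complex.exp (Complex.I * x) - 1‖ ≤ 2*|x| := by
  have hre : (Complex.exp (Complex.I * x) - 1).re = Real.cos x - 1 := by
    rw [mul_comm]; simp [Complex.exp_ofReal_mul_I_re]
  have him : (Complex.exp (Complex.I * x) - 1).im = Real.sin x := by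
    rw [mul_comm]; simp [Complex.exp_ofReal_mul_I_im]
  have h1 : |Real.cos x - 1| ≤ |x| := by
    have hc : Real.cos (x/2) ^ 2 = 1/2 + Real.cos x / 2 := by
      have := Real.cos_sq (x/2)
      rwa [mul_div_cancel₀ x (two_ne_zero)] at this
    have hs2 : Real.sin (x/2) ^ 2 = (1 - Real.cos x)/2 := by
      have := Real.sin_sq_add_cos_sq (x/2)
      linarith
    have hsle : |Real.sin (x/2)| ≤ |x/2| := Real.abs_sin_le_abs
    have hs1 : |Real.sin (x/2)| ≤ 1 := Real.abs_sin_le_one _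
    have e : |Real.cos x - 1| = 2 * Real.sin (x/2) ^ 2 := by
      rw [abs_sub_comm, _root_.abs_of_nonneg (by nlinarith [Real.cos_le_one x])]
      linarith
    rw [e, ← _root_.sq_abs]
    have hx2 : |x/2| = |x|/2 := by rw [abs_div]; norm_num
    nlinarith [abs_nonneg (Real.sin (x/2)), abs_nonneg x, hsle, hs1]
  calc ‖Complex.exp (Complex.I * x) - 1‖
      ≤ |(Complex.exp (Complex.I * x) - 1).re| + |(Complex.exp (Complex.I * x) - 1).im| :=
        Complex.norm_le_abs_re_add_abs_im _
    _ = |Real.cos x - 1| + |Real.sin x| := by rw [hre, him]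
    _ ≤ |x| + |x| := add_le_add h1 Real.abs_sin_le_abs
    _ = 2*|x| := by ring

lemma norm_K_le (a b t s : ℝ) (hab : a ≤ b) : ‖K a b t s‖ ≤ 2*(b-a) := by
  rcases eq_or_ne s 0 with hs | hs
  · simp only [K, hs, Complex.ofReal_zero, mul_zero, zero_mul, Complex.exp_zero, sub_self,
      div_zero, norm_zero]
    linarith
  · have hsplit : Complex.exp (Complex.I*s*(t-a))
        = Complex.exp (Complex.I*s*(t-b)) * Complex.exp (Complex.I*((s*(b-a):ℝ):ℂ)) := by
      rw [← Complex.exp_add]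
      congr 1
      push_cast
      ring
    have hfac : Complex.exp (Complex.I*s*(t-a)) - Complex.exp (Complex.I*s*(t-b))
        = Complex.exp (Complex.I*s*(t-b)) * (Complex.exp (Complex.I*((s*(b-a):ℝ):ℂ)) - 1) := by
      rw [hsplit]
      ring
    have hosc : ‖Complex.exp (Complex.I*s*(t-b))‖ = 1 := by
      rw [Complex.norm_exp]
      simp
    rw [K, norm_div, hfac, norm_mul, hosc, one_mul]
    have h2 : ‖(Complex.I * s : ℂ)‖ = |s| := by
      rw [norm_mul, Complex.norm_I, one_mul, Complex.norm_real,
        Real.norm_eq_abs]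
    rw [h2]
    have h3 := norm_exp_I_mul_sub_one_le (s*(b-a))
    rw [div_le_iff₀ (abs_pos.2 hs)]
    calc ‖Complex.exp (Complex.I*((s*(b-a):ℝ):ℂ)) - 1‖ ≤ 2*|s*(b-a)| := h3
      _ = 2*(b-a)*|s| := by
          rw [abs_mul, _root_.abs_of_nonneg (by linarith : (0:ℝ) ≤ b - a)]
          ring

lemma K_measurable (a b t : ℝ) : Measurable (K a b t) := by
  apply Measurable.div
  · fun_prop
  · fun_prop

lemma K_aestronglyMeasurable (a b t : ℝ) : AEStronglyMeasurable (K a b t) volume :=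
  (K_measurable a b t).aestronglyMeasurable

lemma K_intervalIntegrable (a b t : ℝ) (hab : a ≤ b) (c d : ℝ) :
    IntervalIntegrable (K a b t) volume c d := by
  rw [intervalIntegrable_iff]
  exact (integrableOn_const measure_Ioc_lt_top.ne).mono'
    (K_aestronglyMeasurable a b t).restrict (ae_of_all _ (fun s => norm_K_le a b t s hab))

lemma exp_I_sub (θ : ℝ) :
    Complex.exp (Complex.I * θ) - Complex.exp (-(Complex.I * θ))
      = 2 * Real.sin θ * Complex.I := by
  rw [Complex.ofReal_sin, Complex.sin]
  field_simp
  rw [mul_comm Complex.I (θ:ℂ)]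
  ring_nf
  rw [Complex.I_sq]
  ring

lemma K_add_neg (a b t : ℝ) (s : ℝ) :
    K a b t (-s) + K a b t s
      = ((2 * (Real.sin (s*(t-a)) / s - Real.sin (s*(t-b)) / s) : ℝ) : ℂ) := by
  rcases eq_or_ne s 0 with hs | hs
  · simp [K, hs]
  · have hIs : (Complex.I * s : ℂ) ≠ 0 := by
      simp [Complex.I_ne_zero, Complex.ofReal_ne_zero.2 hs]
    have k1 : Complex.exp (Complex.I*s*((t:ℂ)-a)) - Complex.exp (-(Complex.I*s)*((t:ℂ)-a))
        = 2*((Real.sin (s*(t-a)) : ℝ) : ℂ)*Complex.I := by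
      have h := exp_I_sub (s*(t-a))
      rw [← h]
      congr 2 <;> push_cast <;> ring
    have k2 : Complex.exp (Complex.I*s*((t:ℂ)-b)) - Complex.exp (-(Complex.I*s)*((t:ℂ)-b))
        = 2*((Real.sin (s*(t-b)) : ℝ) : ℂ)*Complex.I := by
      have h := exp_I_sub (s*(t-b))
      rw [← h]
      congr 2 <;> push_cast <;> ring
    have hR : ((2 * (Real.sin (s*(t-a)) / s - Real.sin (s*(t-b)) / s) : ℝ) : ℂ) * (Complex.I * s)
        = 2*((Real.sin (s*(t-a)) : ℝ) : ℂ)*Complex.I - 2*((Real.sin (s*(t-b)) : ℝ) : ℂ)*Complex.I := by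
      push_cast
      have hsC : (s : ℂ) ≠ 0 := Complex.ofReal_ne_zero.2 hs
      field_simp
    rw [K, K, show ((-s : ℝ) : ℂ) = -(s:ℂ) from by push_cast; ring,
      show Complex.I * -(s:ℂ) = -(Complex.I * s) from by ring,
      div_neg, ← neg_div, ← add_div, div_eq_iff hIs, hR]
    linear_combination k1 - k2


lemma sinc_mul_measurable (y : ℝ) :
    AEStronglyMeasurable (fun s : ℝ => Real.sin (s*y) / s) volume :=
  ((Real.measurable_sin.comp (measurable_id.mul_const y)).div measurable_id).aestronglyMeasurable

lemma sinc_mul_intervalIntegrable (y c d : ℝ) :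
    IntervalIntegrable (fun s : ℝ => Real.sin (s*y) / s) volume c d := by
  refine intervalIntegrable_of_bounded_real (sinc_mul_measurable y) (C := |y|) (fun s => ?_) c d
  rcases eq_or_ne s 0 with hs | hs
  · simp [hs]
  · rw [Real.norm_eq_abs, abs_div]
    rw [div_le_iff₀ (abs_pos.2 hs)]
    calc |Real.sin (s*y)| ≤ |s*y| := Real.abs_sin_le_abs
      _ = |y| * |s| := by rw [abs_mul]; ring

lemma K_symm_integral (a b t : ℝ) (hab : a ≤ b) (c : ℝ) :
    ∫ s in (-c)..c, K a b t s
      = ((2 * ((∫ s in (0:ℝ)..c, Real.sin (s*(t-a)) / s)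
          - ∫ s in (0:ℝ)..c, Real.sin (s*(t-b)) / s) : ℝ) : ℂ) := by
  have hi1 : IntervalIntegrable (K a b t) volume (-c) 0 := K_intervalIntegrable a b t hab _ _
  have hi2 : IntervalIntegrable (K a b t) volume 0 c := K_intervalIntegrable a b t hab _ _
  have hsplit : ∫ s in (-c)..c, K a b t s
      = (∫ s in (-c)..(0:ℝ), K a b t s) + ∫ s in (0:ℝ)..c, K a b t s :=
    (intervalIntegral.integral_add_adjacent_intervals hi1 hi2).symm
  have hneg : ∫ s in (-c)..(0:ℝ), K a b t s = ∫ s in (0:ℝ)..c, K a b t (-s) := by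
    have h := intervalIntegral.integral_comp_neg (f := K a b t) (a := (0:ℝ)) (b := c)
    rw [h, neg_zero]
  have hcompneg : IntervalIntegrable (fun s => K a b t (-s)) volume 0 c := by
    refine intervalIntegrable_of_bounded (C := 2*(b-a))
      (((K_measurable a b t).comp measurable_neg).aestronglyMeasurable)
      (fun s => norm_K_le a b t (-s) hab) 0 c
  have hadd : (∫ s in (0:ℝ)..c, K a b t (-s)) + ∫ s in (0:ℝ)..c, K a b t s
      = ∫ s in (0:ℝ)..c, (K a b t (-s) + K a b t s) :=
    (intervalIntegral.integral_add hcompneg hi2).symm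
  rw [hsplit, hneg, hadd]
  have : ∫ s in (0:ℝ)..c, (K a b t (-s) + K a b t s)
      = ∫ s in (0:ℝ)..c, ((2 * (Real.sin (s*(t-a)) / s - Real.sin (s*(t-b)) / s) : ℝ) : ℂ) :=
    intervalIntegral.integral_congr (fun s _ => K_add_neg a b t s)
  rw [this, intervalIntegral.integral_ofReal]
  congr 1
  rw [intervalIntegral.integral_const_mul, intervalIntegral.integral_sub
    (sinc_mul_intervalIntegrable (t-a) 0 c) (sinc_mul_intervalIntegrable (t-b) 0 c)]


lemma main_swap (μ : Measure ℝ) [IsProbabilityMeasure μ] (a b : ℝ) (hab : a ≤ b)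
    {c : ℝ} (hc : 0 ≤ c) :
    (∫ s in (-c)..c,
        ((Complex.exp (-(Complex.I * s * a)) - Complex.exp (-(Complex.I * s * b)))
            / (Complex.I * s)) * ∫ t : ℝ, Complex.exp (Complex.I * s * t) ∂μ)
      = ∫ t : ℝ, (∫ s in (-c)..c, K a b t s) ∂μ := by
  have hcc : -c ≤ c := by linarith
  have hpt : ∀ s : ℝ,
      ((Complex.exp (-(Complex.I * s * a)) - Complex.exp (-(Complex.I * s * b)))
          / (Complex.I * s)) * ∫ t : ℝ, Complex.exp (Complex.I * s * t) ∂μ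
        = ∫ t : ℝ, K a b t s ∂μ := by
    intro s
    rw [← integral_const_mul]
    refine integral_congr_ae (ae_of_all _ (fun t => ?_))
    simp only [K]
    rw [div_mul_eq_mul_div, sub_mul, ← Complex.exp_add, ← Complex.exp_add]
    congr 3 <;> ring
  rw [intervalIntegral.integral_congr (fun s _ => hpt s)]
  rw [intervalIntegral.integral_of_le hcc]
  simp_rw [intervalIntegral.integral_of_le hcc]
  haveI : IsFiniteMeasure (volume.restrict (Set.Ioc (-c) c)) :=
    ⟨by rw [Measure.restrict_apply_univ]; exact measure_Ioc_lt_top⟩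
  have hmeas : AEStronglyMeasurable (fun p : ℝ × ℝ => K a b p.2 p.1)
      ((volume.restrict (Set.Ioc (-c) c)).prod μ) := by
    apply Measurable.aestronglyMeasurable
    apply Measurable.div
    · fun_prop
    · fun_prop
  have hint : Integrable (fun p : ℝ × ℝ => K a b p.2 p.1)
      ((volume.restrict (Set.Ioc (-c) c)).prod μ) :=
    (integrable_const (2*(b-a))).mono' hmeas
      (ae_of_all _ (fun p => norm_K_le a b p.2 p.1 hab))
  exact integral_integral_swap hint

theorem levy_aux (μ : Measure ℝ) [IsProbabilityMeasure μ]
    (a b : ℝ) (hab : a < b) (ha : μ {a} = 0) (hb : μ {b} = 0) :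
    Tendsto (fun c : ℝ =>
        (1 / (2 * (π : ℂ))) * ∫ s in (-c)..c,
          ((Complex.exp (-(Complex.I * s * a)) - Complex.exp (-(Complex.I * s * b)))
              / (Complex.I * s)) *
            ∫ t : ℝ, Complex.exp (Complex.I * s * t) ∂μ)
      atTop (nhds ((μ (Set.Ioc a b)).toReal : ℂ)) := by
  set F : ℝ → ℝ → ℂ := fun c t => (1 / (2 * (π : ℂ))) * ∫ s in (-c)..c, K a b t s with hF
  have hπ : (π : ℝ) ≠ 0 := Real.pi_ne_zero
  have hπC : ((π : ℝ) : ℂ) ≠ 0 := Complex.ofReal_ne_zero.2 hπ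
  -- F expressed via D
  have hFexp : ∀ c t, F c t = (1 / (2 * (π : ℂ))) *
      ((2 * ((∫ s in (0:ℝ)..c, Real.sin (s*(t-a)) / s)
        - ∫ s in (0:ℝ)..c, Real.sin (s*(t-b)) / s) : ℝ) : ℂ) := by
    intro c t
    rw [hF]
    simp only
    rw [K_symm_integral a b t hab.le c]
  -- limit function
  set g : ℝ → ℂ := Set.indicator (Set.Ioc a b) (fun _ => (1:ℂ)) with hg
  have hmain : Tendsto (fun c => ∫ t, F c t ∂μ) atTop (𝓝 ((μ (Set.Ioc a b)).toReal : ℂ)) := by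
    have hint : ∫ t, g t ∂μ = ((μ (Set.Ioc a b)).toReal : ℂ) := by
      rw [hg, integral_indicator_const (1:ℂ) measurableSet_Ioc]
      simp
      rfl
    rw [← hint]
    apply tendsto_integral_filter_of_dominated_convergence (bound := fun _ => (2:ℝ))
    · -- measurability
      filter_upwards with c
      have : F c = fun t => (1 / (2 * (π : ℂ))) *
          ((2 * ((∫ u in (0:ℝ)..(c*(t-a)), Real.sin u / u)
            - ∫ u in (0:ℝ)..(c*(t-b)), Real.sin u / u) : ℝ) : ℂ) := by
        funext t
        rw [hFexp c t, D_eq, D_eq]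
      rw [this]
      have hSi : Continuous (fun y : ℝ => ∫ u in (0:ℝ)..y, Real.sin u / u) :=
        intervalIntegral.continuous_primitive (fun a b => sinc_integrable a b) 0
      apply Continuous.aestronglyMeasurable
      apply Continuous.mul continuous_const
      apply Complex.continuous_ofReal.comp
      apply Continuous.mul continuous_const
      exact (hSi.comp (continuous_const.mul (continuous_id.sub continuous_const))).sub
        (hSi.comp (continuous_const.mul (continuous_id.sub continuous_const)))
    · -- bound
      filter_upwards with c
      refine ae_of_all _ (fun t => ?_)
      rw [hFexp c t]
      rw [norm_mul, Complex.norm_real, Real.norm_eq_abs]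
      have h1 := abs_D_le c (t-a)
      have h2 := abs_D_le c (t-b)
      have h3 : |2 * ((∫ s in (0:ℝ)..c, Real.sin (s*(t-a)) / s)
          - ∫ s in (0:ℝ)..c, Real.sin (s*(t-b)) / s)| ≤ 12 := by
        rw [abs_mul]
        have : |(∫ s in (0:ℝ)..c, Real.sin (s*(t-a)) / s)
            - ∫ s in (0:ℝ)..c, Real.sin (s*(t-b)) / s| ≤ 6 := by
          calc _ ≤ |∫ s in (0:ℝ)..c, Real.sin (s*(t-a)) / s|
                + |∫ s in (0:ℝ)..c, Real.sin (s*(t-b)) / s| := abs_sub _ _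
            _ ≤ 6 := by linarith
        have habs2 : |(2:ℝ)| = 2 := by norm_num
        rw [habs2]
        linarith
      have h4 : ‖(1 / (2 * (π : ℂ)))‖ = 1 / (2 * π) := by
        rw [norm_div, norm_one, norm_mul]
        simp [Real.pi_nonneg, _root_.abs_of_nonneg]
      rw [h4]
      have hπ3 : (3:ℝ) ≤ π := by linarith [Real.pi_gt_three]
      rw [div_mul_eq_mul_div, one_mul, div_le_iff₀ (by positivity)]
      nlinarith
    · exact integrable_const 2
    · -- pointwise limit
      have hae : ∀ᵐ t ∂μ, t ≠ a ∧ t ≠ b := by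
        have h1 : ∀ᵐ t ∂μ, t ≠ a := by
          rw [ae_iff]
          simpa using ha
        have h2 : ∀ᵐ t ∂μ, t ≠ b := by
          rw [ae_iff]
          simpa using hb
        exact h1.and h2
      filter_upwards [hae] with t ht
      obtain ⟨hta, htb⟩ := ht
      have key : ∀ L : ℝ,
          Tendsto (fun c => (∫ s in (0:ℝ)..c, Real.sin (s*(t-a)) / s)
            - ∫ s in (0:ℝ)..c, Real.sin (s*(t-b)) / s) atTop (𝓝 L) →
          Tendsto (fun c => F c t) atTop (𝓝 ((1 / (2 * (π : ℂ))) * ((2 * L : ℝ) : ℂ))) := by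
        intro L hL
        have h2 : Tendsto (fun c => ((2 * ((∫ s in (0:ℝ)..c, Real.sin (s*(t-a)) / s)
            - ∫ s in (0:ℝ)..c, Real.sin (s*(t-b)) / s) : ℝ) : ℂ)) atTop (𝓝 ((2*L : ℝ) : ℂ)) :=
          (Complex.continuous_ofReal.tendsto _).comp (hL.const_mul 2)
        have h3 := h2.const_mul (1 / (2 * (π : ℂ)))
        refine h3.congr (fun c => ?_)
        rw [hFexp c t]
      rcases lt_trichotomy t a with h | h | h
      · -- t < a : both negative
        have l1 := tendsto_D_neg (show t - a < 0 by linarith)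
        have l2 := tendsto_D_neg (show t - b < 0 by linarith)
        have := key 0 (by simpa using l1.sub l2)
        have hg0 : g t = 0 := by
          rw [hg, Set.indicator_of_notMem]
          simp only [Set.mem_Ioc, not_and_or]
          left; linarith
        rw [hg0]
        simpa using this
      · exact absurd h hta
      · rcases lt_trichotomy t b with h' | h' | h'
        · -- a < t < b
          have l1 := tendsto_D_pos (show 0 < t - a by linarith)
          have l2 := tendsto_D_neg (show t - b < 0 by linarith)
          have := key π (by
            have := l1.sub l2
            simpa [sub_neg_eq_add, add_halves] using this)
          have hg1 : g t = 1 := by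
            rw [hg, Set.indicator_of_mem]
            exact ⟨h, h'.le⟩
          rw [hg1]
          have hval : (1 / (2 * (π : ℂ))) * ((2 * π : ℝ) : ℂ) = 1 := by
            push_cast
            field_simp
          rwa [hval] at this
        · exact absurd h' htb
        · -- t > b
          have l1 := tendsto_D_pos (show 0 < t - a by linarith)
          have l2 := tendsto_D_pos (show 0 < t - b by linarith)
          have := key 0 (by simpa using l1.sub l2)
          have hg0 : g t = 0 := by
            rw [hg, Set.indicator_of_notMem]
            simp only [Set.mem_Ioc, not_and_or]
            right; linarith
          rw [hg0]
          simpa using this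
  refine hmain.congr' ?_
  filter_upwards [eventually_ge_atTop (0:ℝ)] with c hc
  rw [main_swap μ a b hab.le hc, ← integral_const_mul]
end LevyAux

/-- Lévy inversion formula: for a probability measure μ on ℝ with no atoms at
a and b (a < b), μ((a,b]) is recovered from its characteristic function. -/
theorem levy_inversion (μ : Measure ℝ) [IsProbabilityMeasure μ]
    (a b : ℝ) (hab : a < b) (ha : μ {a} = 0) (hb : μ {b} = 0) :
    Tendsto (fun c : ℝ =>
        (1 / (2 * (π : ℂ))) * ∫ s in (-c)..c,
          ((Complex.exp (-(Complex.I * s * a)) - Complex.exp (-(Complex.I * s * b)))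
              / (Complex.I * s)) *
            ∫ t : ℝ, Complex.exp (Complex.I * s * t) ∂μ)
      atTop (nhds ((μ (Set.Ioc a b)).toReal : ℂ)) :=
  LevyAux.levy_aux μ a b hab ha hb
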